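/- Let n be a nonempty finite type. There exists a constant C > 0 such that every linear map Φ : Matrix n n ℂ →ₗ[ℂ] Matrix n n ℂ that is trace-preserving and completely positive satisfies ‖Φ X‖_F ≤ C · ‖X‖_F for all X : Matrix n n ℂ. In other words, the set of CPTP maps on Matrix n n ℂ is bounded in the operator norm induced by the Frobenius norm. -/

import Mathlib

open scoped Matrix ComplexOrder

/-- Partial trace over the second factor `B`. -/
noncomputable def ptraceB (A B : Type*) [Fintype A] [Fintype B] :
    Matrix (A × B) (A × B) ℂ →ₗ[ℂ] Matrix A A ℂ where
  toFun M := Matrix.of fun a a' => ∑ b : B, M (a, b) (a', b)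
  map_add' M N := by
    ext a a'
    simp [Finset.sum_add_distrib]
  map_smul' c M := by
    ext a a'
    simp [Finset.mul_sum]

/-- The ancilla-attaching map `ρ ↦ ρ ⊗ |b0⟩⟨b0|`. -/
noncomputable def ancilla (A B : Type*) [Fintype A] [Fintype B] [DecidableEq B] (b0 : B) :
    Matrix A A ℂ →ₗ[ℂ] Matrix (A × B) (A × B) ℂ where
  toFun ρ := Matrix.of fun p p' => if p.2 = b0 ∧ p'.2 = b0 then ρ p.1 p'.1 else 0
  map_add' ρ σ := by
    ext p p'
    by_cases h : p.2 = b0 ∧ p'.2 = b0 <;> simp [h]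
  map_smul' c ρ := by
    ext p p'
    by_cases h : p.2 = b0 ∧ p'.2 = b0 <;> simp [h]

/-- The amplification `I_A ⊗ Φ` of a linear map `Φ` on `B`-indexed matrices. -/
noncomputable def amp (A : Type*) {B : Type*} [Fintype A] [Fintype B]
    (Φ : Matrix B B ℂ →ₗ[ℂ] Matrix B B ℂ) :
    Matrix (A × B) (A × B) ℂ →ₗ[ℂ] Matrix (A × B) (A × B) ℂ where
  toFun M := Matrix.of fun p p' => Φ (Matrix.of fun c c' => M (p.1, c) (p'.1, c')) p.2 p'.2
  map_add' M N := by
    ext p p'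
    simp only [Matrix.of_apply, Matrix.add_apply]
    have h : (Matrix.of fun c c' => M (p.1, c) (p'.1, c') + N (p.1, c) (p'.1, c'))
        = (Matrix.of fun c c' => M (p.1, c) (p'.1, c'))
          + (Matrix.of fun c c' => N (p.1, c) (p'.1, c')) := by
      ext c c'; simp
    rw [h, map_add, Matrix.add_apply]
  map_smul' r M := by
    ext p p'
    simp only [Matrix.of_apply, Matrix.smul_apply, smul_eq_mul, RingHom.id_apply]
    have h : (Matrix.of fun c c' => r * M (p.1, c) (p'.1, c'))
        = r • (Matrix.of fun c c' => M (p.1, c) (p'.1, c')) := by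
      ext c c'; simp
    rw [h, map_smul, Matrix.smul_apply, smul_eq_mul]

/-- The linear map `M ↦ P * M * Q`. -/
noncomputable def sandwich {n : Type*} [Fintype n] (P Q : Matrix n n ℂ) :
    Matrix n n ℂ →ₗ[ℂ] Matrix n n ℂ where
  toFun M := P * M * Q
  map_add' M N := by simp [Matrix.mul_add, Matrix.add_mul]
  map_smul' c M := by simp [Matrix.mul_smul, Matrix.smul_mul]

/-- The transfer operator `T_U[Φ](ρ) = Tr_B(Uᴴ * ((I_A ⊗ Φ)(U * E(ρ) * Uᴴ)) * U)`. -/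
noncomputable def transferOp {A B : Type*} [Fintype A] [Fintype B] [DecidableEq B]
    (b0 : B) (U : Matrix (A × B) (A × B) ℂ)
    (Φ : Matrix B B ℂ →ₗ[ℂ] Matrix B B ℂ) : Matrix A A ℂ →ₗ[ℂ] Matrix A A ℂ :=
  (ptraceB A B) ∘ₗ (sandwich Uᴴ U) ∘ₗ (amp A Φ) ∘ₗ (sandwich U Uᴴ) ∘ₗ (ancilla A B b0)

/-- A linear map on matrices is trace-preserving if it preserves the trace. -/
def IsTracePreserving {n : Type*} [Fintype n]
    (Φ : Matrix n n ℂ →ₗ[ℂ] Matrix n n ℂ) : Prop :=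
  ∀ X : Matrix n n ℂ, (Φ X).trace = X.trace

/-- A linear map on matrices is completely positive if all of its amplifications
map positive semidefinite matrices to positive semidefinite matrices. -/
def IsCompletelyPositive {n : Type*} [Fintype n]
    (Φ : Matrix n n ℂ →ₗ[ℂ] Matrix n n ℂ) : Prop :=
  ∀ (m : Type) (_ : Fintype m), ∀ M : Matrix (m × n) (m × n) ℂ,
    M.PosSemidef → (amp m Φ M).PosSemidef

/-- A CPTP map (quantum channel). -/
def IsCPTP {n : Type*} [Fintype n] (Φ : Matrix n n ℂ →ₗ[ℂ] Matrix n n ℂ) : Prop :=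
  IsTracePreserving Φ ∧ IsCompletelyPositive Φ

attribute [local instance] Matrix.frobeniusSeminormedAddCommGroup

attribute [local instance] Matrix.frobeniusNormedSpace

set_option linter.unusedSectionVars false

section AuxLemmas
variable {n : Type} [Fintype n]

lemma aux_rank1_psd (v : n → ℂ) :
    (Matrix.vecMulVec v (star v)).PosSemidef := by
  rw [Matrix.vecMulVec_eq Unit, ← Matrix.conjTranspose_replicateCol]
  exact Matrix.posSemidef_self_mul_conjTranspose _

lemma aux_norm_le_trace [DecidableEq n] {M : Matrix n n ℂ}
    (hM : M.PosSemidef) : ‖M‖ ≤ M.trace.re := by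
  open MatrixOrder in
  obtain ⟨S, hS, -, hmul⟩ := CFC.exists_sqrt_of_isSelfAdjoint_of_quasispectrumRestricts hM.isHermitian
    (QuasispectrumRestricts.nnreal_of_nonneg hM.nonneg)
  have hHerm : Sᴴ = S := hS.star_eq
  set t : ℝ := ∑ i, ∑ j, ‖S i j‖ ^ 2 with ht
  have htn : 0 ≤ t := Finset.sum_nonneg fun i _ => Finset.sum_nonneg fun j _ => sq_nonneg _
  have key : M.trace.re = t := by
    rw [← hmul]
    simp only [Matrix.trace, Matrix.diag, Matrix.mul_apply, ht]
    rw [Complex.re_sum]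
    refine Finset.sum_congr rfl fun i _ => ?_
    rw [Complex.re_sum]
    refine Finset.sum_congr rfl fun j _ => ?_
    have : S j i = starRingEnd ℂ (S i j) := by
      conv_lhs => rw [← hHerm]
      rfl
    rw [this, Complex.mul_conj]
    simp [Complex.sq_norm, Complex.normSq]
  have hn : ‖S‖ = t ^ (1/2 : ℝ) := by
    rw [Matrix.frobenius_norm_def, ht]
    congr 1
    refine Finset.sum_congr rfl fun i _ => Finset.sum_congr rfl fun j _ => ?_
    rw [show (2:ℝ) = ((2:ℕ):ℝ) by norm_num, Real.rpow_natCast]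
  have h2 : ‖S‖ * ‖S‖ = t := by
    rw [hn, ← Real.rpow_add' htn (by norm_num)]
    norm_num
  calc ‖M‖ ≤ ‖S‖ * ‖S‖ := by rw [← hmul]; exact Matrix.frobenius_norm_mul _ _
    _ = M.trace.re := by rw [h2, key]

lemma aux_cp_pos {Φ : Matrix n n ℂ →ₗ[ℂ] Matrix n n ℂ}
    (hCP : IsCompletelyPositive Φ) {M : Matrix n n ℂ} (hM : M.PosSemidef) :
    (Φ M).PosSemidef := by
  have h := hCP Unit inferInstance (M.submatrix Prod.snd Prod.snd) (hM.submatrix _)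
  have h2 := h.submatrix (fun i : n => (((), i) : Unit × n))
  have heq : (amp Unit Φ (M.submatrix Prod.snd Prod.snd)).submatrix
      (fun i : n => (((), i) : Unit × n)) (fun i : n => (((), i) : Unit × n)) = Φ M := by
    ext i j
    rfl
  rwa [heq] at h2

lemma aux_bound_rank1 [DecidableEq n] {Φ : Matrix n n ℂ →ₗ[ℂ] Matrix n n ℂ}
    (hTP : IsTracePreserving Φ) (hCP : IsCompletelyPositive Φ) (v : n → ℂ) :
    ‖Φ (Matrix.vecMulVec v (star v))‖ ≤ ∑ a, ‖v a‖ ^ 2 := by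
  have h1 := aux_norm_le_trace (aux_cp_pos hCP (aux_rank1_psd v))
  rw [hTP _] at h1
  refine h1.trans_eq ?_
  simp only [Matrix.trace, Matrix.diag, Matrix.vecMulVec_apply, Pi.star_apply]
  rw [Complex.re_sum]
  refine Finset.sum_congr rfl fun a _ => ?_
  rw [show star (v a) = starRingEnd ℂ (v a) from rfl, Complex.mul_conj]
  simp [Complex.sq_norm]

lemma aux_sum_sq [DecidableEq n] (i j : n) (c : ℂ) (hc : ‖c‖ ≤ 1) :
    ∑ a, ‖((Pi.single i 1 : n → ℂ) + c • (Pi.single j 1 : n → ℂ)) a‖ ^ 2 ≤ 4 := by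
  have h : ∀ a : n, ‖((Pi.single i 1 : n → ℂ) + c • (Pi.single j 1 : n → ℂ)) a‖ ^ 2 ≤
      2 * ‖(Pi.single i 1 : n → ℂ) a‖ ^ 2 + 2 * ‖(c • (Pi.single j 1 : n → ℂ)) a‖ ^ 2 := by
    intro a
    have h1 : ‖((Pi.single i 1 : n → ℂ) + c • (Pi.single j 1 : n → ℂ)) a‖ ≤
        ‖(Pi.single i 1 : n → ℂ) a‖ + ‖(c • (Pi.single j 1 : n → ℂ)) a‖ := norm_add_le _ _
    nlinarith [norm_nonneg (((Pi.single i 1 : n → ℂ) + c • (Pi.single j 1 : n → ℂ)) a),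
      norm_nonneg ((Pi.single i 1 : n → ℂ) a), norm_nonneg ((c • (Pi.single j 1 : n → ℂ)) a),
      sq_nonneg (‖(Pi.single i 1 : n → ℂ) a‖ - ‖(c • (Pi.single j 1 : n → ℂ)) a‖),
      mul_self_nonneg (‖(Pi.single i 1 : n → ℂ) a‖ + ‖(c • (Pi.single j 1 : n → ℂ)) a‖)]
  have hs1 : ∑ a, ‖(Pi.single i 1 : n → ℂ) a‖ ^ 2 = 1 := by
    simp [Pi.single_apply, apply_ite (fun z : ℂ => ‖z‖ ^ 2), apply_ite (fun r : ℝ => r ^ 2)]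
  have hs2 : ∑ a, ‖(c • (Pi.single j 1 : n → ℂ)) a‖ ^ 2 ≤ 1 := by
    have he : ∀ a : n, ‖(c • (Pi.single j 1 : n → ℂ)) a‖ ^ 2
        = ‖c‖ ^ 2 * ‖(Pi.single j 1 : n → ℂ) a‖ ^ 2 := by
      intro a
      rw [Pi.smul_apply, norm_smul]
      ring
    simp_rw [he, ← Finset.mul_sum]
    have hs : ∑ a, ‖(Pi.single j 1 : n → ℂ) a‖ ^ 2 = 1 := by
      simp [Pi.single_apply, apply_ite (fun z : ℂ => ‖z‖ ^ 2), apply_ite (fun r : ℝ => r ^ 2)]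
    rw [hs, mul_one]
    nlinarith [norm_nonneg c]
  calc ∑ a, ‖((Pi.single i 1 : n → ℂ) + c • (Pi.single j 1 : n → ℂ)) a‖ ^ 2
      ≤ ∑ a, (2 * ‖(Pi.single i 1 : n → ℂ) a‖ ^ 2 + 2 * ‖(c • (Pi.single j 1 : n → ℂ)) a‖ ^ 2) :=
        Finset.sum_le_sum fun a _ => h a
    _ = 2 * (∑ a, ‖(Pi.single i 1 : n → ℂ) a‖ ^ 2)
        + 2 * ∑ a, ‖(c • (Pi.single j 1 : n → ℂ)) a‖ ^ 2 := by
        rw [Finset.sum_add_distrib, Finset.mul_sum, Finset.mul_sum]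
    _ ≤ 2 * 1 + 2 * 1 := by rw [hs1]; nlinarith
    _ = 4 := by norm_num

lemma aux_star_single [DecidableEq n] (k : n) :
    star ((Pi.single k 1 : n → ℂ)) = (Pi.single k 1 : n → ℂ) := by
  ext a
  simp [Pi.single_apply, apply_ite (star : ℂ → ℂ)]

lemma aux_polarization [DecidableEq n] (i j : n) :
    Matrix.single i j (1:ℂ) =
      (1/4 : ℂ) • (Matrix.vecMulVec ((Pi.single i 1 : n → ℂ) + (1:ℂ) • (Pi.single j 1 : n → ℂ))
          (star ((Pi.single i 1 : n → ℂ) + (1:ℂ) • (Pi.single j 1 : n → ℂ)))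
        - Matrix.vecMulVec ((Pi.single i 1 : n → ℂ) + (-1:ℂ) • (Pi.single j 1 : n → ℂ))
          (star ((Pi.single i 1 : n → ℂ) + (-1:ℂ) • (Pi.single j 1 : n → ℂ)))
        + Complex.I • Matrix.vecMulVec ((Pi.single i 1 : n → ℂ) + Complex.I • (Pi.single j 1 : n → ℂ))
          (star ((Pi.single i 1 : n → ℂ) + Complex.I • (Pi.single j 1 : n → ℂ)))
        - Complex.I • Matrix.vecMulVec ((Pi.single i 1 : n → ℂ) + (-Complex.I) • (Pi.single j 1 : n → ℂ))
          (star ((Pi.single i 1 : n → ℂ) + (-Complex.I) • (Pi.single j 1 : n → ℂ)))) := by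
  rw [Matrix.single_eq_single_vecMulVec_single]
  simp only [star_add, star_smul, aux_star_single, star_one, star_neg, Complex.star_def,
    Complex.conj_I]
  ext a b
  simp only [Matrix.smul_apply, Matrix.sub_apply, Matrix.add_apply, Matrix.vecMulVec_apply,
    Pi.add_apply, Pi.smul_apply, smul_eq_mul, one_mul, neg_mul, neg_neg, one_smul, neg_smul,
    Pi.neg_apply]
  linear_combination (((Pi.single i 1 : n → ℂ) a * (Pi.single j 1 : n → ℂ) b
    - (Pi.single j 1 : n → ℂ) a * (Pi.single i 1 : n → ℂ) b) / 2) * Complex.I_sq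

lemma aux_bound_std [DecidableEq n] {Φ : Matrix n n ℂ →ₗ[ℂ] Matrix n n ℂ}
    (hTP : IsTracePreserving Φ) (hCP : IsCompletelyPositive Φ) (i j : n) :
    ‖Φ (Matrix.single i j (1:ℂ))‖ ≤ 4 := by
  set v1 : n → ℂ := (Pi.single i 1 : n → ℂ) + (1:ℂ) • (Pi.single j 1 : n → ℂ) with hv1
  set v2 : n → ℂ := (Pi.single i 1 : n → ℂ) + (-1:ℂ) • (Pi.single j 1 : n → ℂ) with hv2
  set v3 : n → ℂ := (Pi.single i 1 : n → ℂ) + Complex.I • (Pi.single j 1 : n → ℂ) with hv3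
  set v4 : n → ℂ := (Pi.single i 1 : n → ℂ) + (-Complex.I) • (Pi.single j 1 : n → ℂ) with hv4
  set Y1 := Φ (Matrix.vecMulVec v1 (star v1)) with hY1
  set Y2 := Φ (Matrix.vecMulVec v2 (star v2)) with hY2
  set Y3 := Φ (Matrix.vecMulVec v3 (star v3)) with hY3
  set Y4 := Φ (Matrix.vecMulVec v4 (star v4)) with hY4
  have b1 := (aux_bound_rank1 hTP hCP v1).trans (aux_sum_sq i j 1 (by norm_num))
  have b2 := (aux_bound_rank1 hTP hCP v2).trans (aux_sum_sq i j (-1) (by norm_num))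
  have b3 := (aux_bound_rank1 hTP hCP v3).trans (aux_sum_sq i j Complex.I (by simp))
  have b4 := (aux_bound_rank1 hTP hCP v4).trans (aux_sum_sq i j (-Complex.I) (by simp))
  have heq : Φ (Matrix.single i j (1:ℂ))
      = (1/4 : ℂ) • (Y1 - Y2 + Complex.I • Y3 - Complex.I • Y4) := by
    rw [aux_polarization i j, map_smul, map_sub, map_add, map_sub, map_smul, map_smul]
  rw [heq, norm_smul]
  have hn : ‖Y1 - Y2 + Complex.I • Y3 - Complex.I • Y4‖ ≤ ‖Y1‖ + ‖Y2‖ + ‖Y3‖ + ‖Y4‖ := by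
    calc ‖Y1 - Y2 + Complex.I • Y3 - Complex.I • Y4‖
        ≤ ‖Y1 - Y2 + Complex.I • Y3‖ + ‖Complex.I • Y4‖ := norm_sub_le _ _
      _ ≤ ‖Y1 - Y2‖ + ‖Complex.I • Y3‖ + ‖Complex.I • Y4‖ :=
          add_le_add_left (norm_add_le _ _) _
      _ ≤ (‖Y1‖ + ‖Y2‖) + ‖Complex.I • Y3‖ + ‖Complex.I • Y4‖ :=
          add_le_add_left (add_le_add_left (norm_sub_le _ _) _) _
      _ = ‖Y1‖ + ‖Y2‖ + ‖Y3‖ + ‖Y4‖ := by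
          rw [norm_smul, norm_smul]
          simp [add_assoc]
  have h14 : ‖(1/4 : ℂ)‖ = 1/4 := by norm_num
  rw [h14]
  nlinarith [norm_nonneg Y1, norm_nonneg Y2, norm_nonneg Y3, norm_nonneg Y4]

lemma aux_entry_le (X : Matrix n n ℂ) (i j : n) : ‖X i j‖ ≤ ‖X‖ := by
  rw [Matrix.frobenius_norm_def]
  have h0 : ‖X i j‖ ^ (2:ℝ) ≤ ∑ a, ∑ b, ‖X a b‖ ^ (2:ℝ) := by
    calc ‖X i j‖ ^ (2:ℝ) ≤ ∑ b, ‖X i b‖ ^ (2:ℝ) :=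
          Finset.single_le_sum (fun b _ => Real.rpow_nonneg (norm_nonneg _) _)
            (Finset.mem_univ j)
      _ ≤ ∑ a, ∑ b, ‖X a b‖ ^ (2:ℝ) :=
          Finset.single_le_sum
            (fun a _ => Finset.sum_nonneg fun b _ => Real.rpow_nonneg (norm_nonneg _) _)
            (Finset.mem_univ i)
  have h1 : ‖X i j‖ = (‖X i j‖ ^ (2:ℝ)) ^ (1/2:ℝ) := by
    rw [← Real.rpow_mul (norm_nonneg _)]
    norm_num
  rw [h1]
  exact Real.rpow_le_rpow (Real.rpow_nonneg (norm_nonneg _) _) h0 (by norm_num)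

end AuxLemmas


/-- **Boundedness of the set of quantum channels.** There is a constant `C > 0` such that
every CPTP map `Φ` on `Matrix n n ℂ` satisfies `‖Φ X‖_F ≤ C * ‖X‖_F` in Frobenius norm. -/
theorem cptp_uniformly_bounded
    {n : Type} [Fintype n] [Nonempty n] :
    ∃ C : ℝ, 0 < C ∧
      ∀ Φ : Matrix n n ℂ →ₗ[ℂ] Matrix n n ℂ,
        IsTracePreserving Φ → IsCompletelyPositive Φ →
        ∀ X : Matrix n n ℂ, ‖Φ X‖ ≤ C * ‖X‖ := by
  classical
  refine ⟨4 * (Fintype.card n : ℝ) ^ 2 + 1, by positivity, ?_⟩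
  intro Φ hTP hCP X
  have hX : Φ X = ∑ i : n, ∑ j : n, X i j • Φ (Matrix.single i j (1:ℂ)) := by
    conv_lhs => rw [Matrix.matrix_eq_sum_single X]
    rw [map_sum]
    refine Finset.sum_congr rfl fun i _ => ?_
    rw [map_sum]
    refine Finset.sum_congr rfl fun j _ => ?_
    rw [show Matrix.single i j (X i j) = X i j • Matrix.single i j (1:ℂ) by
      rw [Matrix.smul_single, smul_eq_mul, mul_one], map_smul]
  rw [hX]
  have hcard : (0:ℝ) ≤ (Fintype.card n : ℝ) := Nat.cast_nonneg _
  calc ‖∑ i : n, ∑ j : n, X i j • Φ (Matrix.single i j (1:ℂ))‖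
      ≤ ∑ i : n, ∑ j : n, ‖X i j • Φ (Matrix.single i j (1:ℂ))‖ :=
        (norm_sum_le _ _).trans (Finset.sum_le_sum fun i _ => norm_sum_le _ _)
    _ ≤ ∑ _i : n, ∑ _j : n, ‖X‖ * 4 := by
        refine Finset.sum_le_sum fun i _ => Finset.sum_le_sum fun j _ => ?_
        rw [norm_smul]
        exact mul_le_mul (aux_entry_le X i j) (aux_bound_std hTP hCP i j)
          (norm_nonneg _) (norm_nonneg _)
    _ = (Fintype.card n : ℝ) ^ 2 * (‖X‖ * 4) := by
        simp [Finset.sum_const, Finset.card_univ]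
        ring
    _ ≤ (4 * (Fintype.card n : ℝ) ^ 2 + 1) * ‖X‖ := by
        nlinarith [norm_nonneg X]
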